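/- For every integer n ≥ 2 and all spanners S, S' ∈ X of the graph G_n with S ≠ S', the value vectors f(S) = (f1(S), f2(S)) and f(S') = (f1(S'), f2(S')) are distinct, and neither dominates the other. -/

import Mathlib

namespace MSpPaper

open SimpleGraph

variable {V : Type*}

/-- Minimum total `c2`-weight of a walk from `u` to `v` using only edges in `F`
(the set of weights of such walks is a set of naturals; its infimum is `0` when no walk exists). -/
noncomputable def wdist (F : Set (Sym2 V)) (c2 : Sym2 V → ℕ) (u v : V) : ℕ :=
  sInf (Set.range fun p : (SimpleGraph.fromEdgeSet F).Walk u v => (p.edges.map c2).sum)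

/-- `S` is a spanner of `G`: a subset of the edges such that the resulting subgraph is connected. -/
def IsSpanner (G : SimpleGraph V) (S : Set (Sym2 V)) : Prop :=
  S ⊆ G.edgeSet ∧ (SimpleGraph.fromEdgeSet S).Connected

/-- First objective: total `c1`-cost of the spanner. -/
def f1 (c1 : Sym2 V → ℤ) (S : Finset (Sym2 V)) : ℤ := ∑ e ∈ S, c1 e

open scoped Classical in
/-- Second objective (stretch factor): maximum over pairs of distinct vertices of the
distance ratio `d^S(u,v)/d^E(u,v)` (junk value `0` if there is no pair of distinct vertices). -/
noncomputable def f2 [Fintype V] (E S : Set (Sym2 V)) (c2 : Sym2 V → ℕ) : ℚ :=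
  if h : ((Finset.univ : Finset (V × V)).filter fun p => p.1 ≠ p.2).Nonempty then
    ((Finset.univ : Finset (V × V)).filter fun p => p.1 ≠ p.2).sup' h
      (fun p => (wdist S c2 p.1 p.2 : ℚ) / (wdist E c2 p.1 p.2 : ℚ))
  else 0

/-- The value vector of a spanner. -/
noncomputable def valueVec [Fintype V] (G : SimpleGraph V) (c1 : Sym2 V → ℤ) (c2 : Sym2 V → ℕ)
    (S : Finset (Sym2 V)) : ℚ × ℚ :=
  ((f1 c1 S : ℚ), f2 G.edgeSet (↑S) c2)

/-- `y'` dominates `y`: componentwise `≤` and unequal. -/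
def Dominates (y' y : ℚ × ℚ) : Prop := y' ≤ y ∧ y' ≠ y

/-- The non-dominated set of an MSp instance. -/
def YN [Fintype V] (G : SimpleGraph V) (c1 : Sym2 V → ℤ) (c2 : Sym2 V → ℕ) : Set (ℚ × ℚ) :=
  {y | (∃ S : Finset (Sym2 V), IsSpanner G (↑S) ∧ valueVec G c1 c2 S = y) ∧
       ∀ S' : Finset (Sym2 V), IsSpanner G (↑S') → ¬ Dominates (valueVec G c1 c2 S') y}


/-! ### The family of instances `G_n` from Section 3 -/

/-- Vertices of `G_n`: for each `i`, the vertex `(i,0)` is `v_i`, `(i,1)` is `v_i'`,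
and `(i,2)` is `w_i`. -/
abbrev Vtx (n : ℕ) := Fin n × Fin 3

/-- The weights `(c1, c2)` of the (ordered) pair `a b` of vertices of `G_n`;
`(0, 0)` (in particular `c2 = 0`) marks non-edges. -/
def wtG (n : ℕ) (a b : Vtx n) : ℤ × ℕ :=
  if a.2 = 0 ∧ b.2 = 2 ∧ a.1 = b.1 then (2 ^ ((a.1 : ℕ) + 1), 2 ^ ((a.1 : ℕ) + 1))
  else if a.2 = 0 ∧ b.2 = 1 ∧ a.1 = b.1 then (0, 2 ^ ((a.1 : ℕ) + 1))
  else if a.2 = 1 ∧ b.2 = 2 ∧ a.1 = b.1 then (0, 2 ^ ((a.1 : ℕ) + 1))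
  else if a.2 = 2 ∧ b.2 = 0 ∧ (b.1 : ℕ) = (a.1 : ℕ) + 1 then (0, 1)
  else if a.2 = 0 ∧ b.2 = 2 ∧ (a.1 : ℕ) = 0 ∧ (b.1 : ℕ) = n - 1 then (2 ^ (n + 1), 1)
  else (0, 0)

/-- The cost function `c1` of `G_n`. -/
def c1G (n : ℕ) : Sym2 (Vtx n) → ℤ :=
  Sym2.lift ⟨fun a b => (wtG n a b).1 + (wtG n b a).1, fun _ _ => add_comm _ _⟩

/-- The length function `c2` of `G_n`. -/
def c2G (n : ℕ) : Sym2 (Vtx n) → ℕ :=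
  Sym2.lift ⟨fun a b => (wtG n a b).2 + (wtG n b a).2, fun _ _ => add_comm _ _⟩

/-- The edge set of `G_n`: exactly the pairs with positive length. -/
def EG (n : ℕ) : Set (Sym2 (Vtx n)) := {e | c2G n e ≠ 0}

/-- The graph `G_n`. -/
def Gn (n : ℕ) : SimpleGraph (Vtx n) := SimpleGraph.fromEdgeSet (EG n)

/-- The vertex `v_i`. -/
def vG (n : ℕ) (i : Fin n) : Vtx n := (i, 0)
/-- The vertex `v_i'`. -/
def pG (n : ℕ) (i : Fin n) : Vtx n := (i, 1)
/-- The vertex `w_i`. -/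
def wG (n : ℕ) (i : Fin n) : Vtx n := (i, 2)
/-- The vertex `s = v_1`. -/
def sG (n : ℕ) (hn : 0 < n) : Vtx n := (⟨0, hn⟩, 0)
/-- The vertex `t = w_n`. -/
def tG (n : ℕ) (hn : 0 < n) : Vtx n := (⟨n - 1, Nat.sub_lt hn one_pos⟩, 2)

/-- Membership in `X`: spanners of `G_n` containing every edge of zero `c1`-cost and
not containing the edge `{s, t}`. -/
def memX (n : ℕ) (hn : 0 < n) (S : Finset (Sym2 (Vtx n))) : Prop :=
  IsSpanner (Gn n) (↑S) ∧ (∀ e ∈ (Gn n).edgeSet, c1G n e = 0 → e ∈ S) ∧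
    s(sG n hn, tG n hn) ∉ S


variable {F : Set (Sym2 V)} {c2 : Sym2 V → ℕ} {u v w : V}

lemma wdist_le (p : (SimpleGraph.fromEdgeSet F).Walk u v) :
    wdist F c2 u v ≤ (p.edges.map c2).sum := Nat.sInf_le ⟨p, rfl⟩

lemma wdist_self : wdist F c2 u u = 0 := by
  have := wdist_le (c2 := c2) (SimpleGraph.Walk.nil (G := SimpleGraph.fromEdgeSet F) (u := u))
  simpa using this

lemma wdist_le_edge (h : (SimpleGraph.fromEdgeSet F).Adj u v) :
    wdist F c2 u v ≤ c2 s(u, v) := by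
  simpa using wdist_le (c2 := c2) (SimpleGraph.Walk.cons h SimpleGraph.Walk.nil)

lemma wdist_exists (h : Nonempty ((SimpleGraph.fromEdgeSet F).Walk u v)) :
    ∃ p : (SimpleGraph.fromEdgeSet F).Walk u v, wdist F c2 u v = (p.edges.map c2).sum := by
  have : (Set.range fun p : (SimpleGraph.fromEdgeSet F).Walk u v => (p.edges.map c2).sum).Nonempty :=
    Set.range_nonempty _
  obtain ⟨p, hp⟩ := Nat.sInf_mem this
  exact ⟨p, hp.symm⟩

lemma wdist_triangle (h1 : Nonempty ((SimpleGraph.fromEdgeSet F).Walk u v))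
    (h2 : Nonempty ((SimpleGraph.fromEdgeSet F).Walk v w)) :
    wdist F c2 u w ≤ wdist F c2 u v + wdist F c2 v w := by
  obtain ⟨p, hp⟩ := wdist_exists (c2 := c2) h1
  obtain ⟨q, hq⟩ := wdist_exists (c2 := c2) h2
  calc wdist F c2 u w ≤ ((p.append q).edges.map c2).sum := wdist_le _
  _ = wdist F c2 u v + wdist F c2 v w := by
      rw [SimpleGraph.Walk.edges_append, List.map_append, List.sum_append, hp, hq]

lemma wdist_comm : wdist F c2 u v = wdist F c2 v u := by
  unfold wdist
  congr 1
  ext x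
  constructor
  · rintro ⟨p, rfl⟩
    refine ⟨p.reverse, ?_⟩
    show (List.map c2 p.reverse.edges).sum = _
    rw [SimpleGraph.Walk.edges_reverse, List.map_reverse]
    exact List.sum_reverse _
  · rintro ⟨p, rfl⟩
    refine ⟨p.reverse, ?_⟩
    show (List.map c2 p.reverse.edges).sum = _
    rw [SimpleGraph.Walk.edges_reverse, List.map_reverse]
    exact List.sum_reverse _

lemma weight_ge_potential (φ : V → ℤ)
    (hφ : ∀ a b, (SimpleGraph.fromEdgeSet F).Adj a b → |φ a - φ b| ≤ (c2 s(a, b) : ℤ)) :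
    ∀ {u v : V} (p : (SimpleGraph.fromEdgeSet F).Walk u v),
      |φ u - φ v| ≤ ((p.edges.map c2).sum : ℤ) := by
  intro u v p
  induction p with
  | nil => simp
  | cons h q ih =>
    rename_i a b c
    calc |φ a - φ c| ≤ |φ a - φ b| + |φ b - φ c| := abs_sub_le _ _ _
    _ ≤ (c2 s(a, b) : ℤ) + ((q.edges.map c2).sum : ℤ) := add_le_add (hφ a b h) ih
    _ = _ := by rw [SimpleGraph.Walk.edges_cons, List.map_cons, List.sum_cons]; push_cast; ring

lemma weight_ge_one (hF : ∀ e ∈ F, c2 e ≠ 0) (hne : u ≠ v)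
    (p : (SimpleGraph.fromEdgeSet F).Walk u v) : 1 ≤ (p.edges.map c2).sum := by
  cases p with
  | nil => exact absurd rfl hne
  | cons h q =>
    rename_i x
    have he : s(u, x) ∈ F := ((SimpleGraph.fromEdgeSet_adj F).mp h).1
    have := hF _ he
    simp only [SimpleGraph.Walk.edges_cons, List.map_cons, List.sum_cons]
    omega


section Inst
variable {n : ℕ}

lemma c2_vv' (i : Fin n) : c2G n s(vG n i, pG n i) = 2 ^ ((i:ℕ)+1) := by
  simp [c2G, wtG, vG, pG]

lemma c2_v'w (i : Fin n) : c2G n s(pG n i, wG n i) = 2 ^ ((i:ℕ)+1) := by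
  simp [c2G, wtG, pG, wG]

lemma c2_chord (i : Fin n) : c2G n s(vG n i, wG n i) = 2 ^ ((i:ℕ)+1) := by
  simp [c2G, wtG, vG, wG]

lemma c2_conn (i j : Fin n) (h : (j:ℕ) = (i:ℕ)+1) : c2G n s(wG n i, vG n j) = 1 := by
  have hji : j ≠ i := by intro e; rw [e] at h; omega
  simp [c2G, wtG, vG, wG, h, hji]

lemma c2_st (hn : 2 ≤ n) : c2G n s(sG n (Nat.zero_lt_of_lt hn), tG n (Nat.zero_lt_of_lt hn)) = 1 := by
  have h1 : ¬ ((⟨0, by omega⟩ : Fin n) = (⟨n-1, by omega⟩ : Fin n)) := by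
    simp [Fin.ext_iff]; omega
  simp [c2G, wtG, sG, tG, h1]


lemma c1_vv' (i : Fin n) : c1G n s(vG n i, pG n i) = 0 := by
  simp [c1G, wtG, vG, pG]

lemma c1_v'w (i : Fin n) : c1G n s(pG n i, wG n i) = 0 := by
  simp [c1G, wtG, pG, wG]

lemma c1_chord (i : Fin n) : c1G n s(vG n i, wG n i) = 2 ^ ((i:ℕ)+1) := by
  simp [c1G, wtG, vG, wG]

lemma c1_conn (i j : Fin n) (h : (j:ℕ) = (i:ℕ)+1) : c1G n s(wG n i, vG n j) = 0 := by
  have hji : j ≠ i := by intro e; rw [e] at h; omega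
  simp [c1G, wtG, vG, wG, h, hji]

lemma wt2_cases {a b : Vtx n} (h : (wtG n a b).2 ≠ 0) :
    (a.2 = 0 ∧ b.2 = 2 ∧ a.1 = b.1) ∨ (a.2 = 0 ∧ b.2 = 1 ∧ a.1 = b.1) ∨
    (a.2 = 1 ∧ b.2 = 2 ∧ a.1 = b.1) ∨ (a.2 = 2 ∧ b.2 = 0 ∧ (b.1:ℕ) = (a.1:ℕ)+1) ∨
    (a.2 = 0 ∧ b.2 = 2 ∧ (a.1:ℕ) = 0 ∧ (b.1:ℕ) = n-1) := by
  unfold wtG at h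
  split_ifs at h with h1 h2 h3 h4 h5
  · exact Or.inl h1
  · exact Or.inr (Or.inl h2)
  · exact Or.inr (Or.inr (Or.inl h3))
  · exact Or.inr (Or.inr (Or.inr (Or.inl h4)))
  · exact Or.inr (Or.inr (Or.inr (Or.inr h5)))
  · simp at h

lemma wt1_cases {a b : Vtx n} (h : (wtG n a b).1 ≠ 0) :
    (a.2 = 0 ∧ b.2 = 2 ∧ a.1 = b.1) ∨
    (a.2 = 0 ∧ b.2 = 2 ∧ (a.1:ℕ) = 0 ∧ (b.1:ℕ) = n-1) := by
  unfold wtG at h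
  split_ifs at h with h1 h2 h3 h4 h5
  · exact Or.inl h1
  · simp at h
  · simp at h
  · simp at h
  · exact Or.inr h5
  · simp at h


def chord (n : ℕ) (i : Fin n) : Sym2 (Vtx n) := s(vG n i, wG n i)

lemma chord_injective (n : ℕ) : Function.Injective (chord n) := by
  intro i j h
  simp only [chord, vG, wG, Sym2.eq, Sym2.rel_iff', Prod.mk.injEq, Prod.swap_prod_mk] at h
  rcases h with ⟨h, -⟩ | ⟨h, h2⟩
  · exact h.1
  · exact absurd h2.2 (by decide)

lemma mem_edgeSet_of {a b : Vtx n} (h2 : c2G n s(a, b) ≠ 0) (hab : a ≠ b) :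
    s(a, b) ∈ (Gn n).edgeSet := by
  rw [Gn, SimpleGraph.edgeSet_fromEdgeSet]
  exact ⟨h2, by simpa using hab⟩

lemma chord_mem_edgeSet (i : Fin n) : chord n i ∈ (Gn n).edgeSet :=
  mem_edgeSet_of (by rw [c2_chord]; positivity) (by simp [vG, wG])

lemma vv'_mem_edgeSet (i : Fin n) : s(vG n i, pG n i) ∈ (Gn n).edgeSet :=
  mem_edgeSet_of (by rw [c2_vv']; positivity) (by simp [vG, pG])

lemma v'w_mem_edgeSet (i : Fin n) : s(pG n i, wG n i) ∈ (Gn n).edgeSet :=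
  mem_edgeSet_of (by rw [c2_v'w]; positivity) (by simp [pG, wG])

lemma conn_mem_edgeSet (i j : Fin n) (h : (j:ℕ) = (i:ℕ)+1) :
    s(wG n i, vG n j) ∈ (Gn n).edgeSet :=
  mem_edgeSet_of (by rw [c2_conn i j h]; norm_num) (by simp [vG, wG])

lemma st_mem_edgeSet (hn : 2 ≤ n) :
    s(sG n (Nat.zero_lt_of_lt hn), tG n (Nat.zero_lt_of_lt hn)) ∈ (Gn n).edgeSet :=
  mem_edgeSet_of (by rw [c2_st hn]; norm_num)
    (by simp [sG, tG])

lemma c1_pos_classify (hn : 2 ≤ n) {e : Sym2 (Vtx n)}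
    (hc : c1G n e ≠ 0) : (∃ i, e = chord n i) ∨ e = s(sG n (Nat.zero_lt_of_lt hn), tG n (Nat.zero_lt_of_lt hn)) := by
  induction e using Sym2.ind with | _ a b =>
  have hor : (wtG n a b).1 ≠ 0 ∨ (wtG n b a).1 ≠ 0 := by
    by_contra h
    push_neg at h
    simp only [c1G, Sym2.lift_mk, h.1, h.2, add_zero] at hc
    exact hc rfl
  obtain ⟨ia, ra⟩ := a
  obtain ⟨ib, rb⟩ := b
  have key : ∀ x y : Fin n, ∀ rx ry : Fin 3,
      (rx = 0 ∧ ry = 2 ∧ x = y) ∨ (rx = 0 ∧ ry = 2 ∧ (x:ℕ) = 0 ∧ (y:ℕ) = n-1) →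
      (∃ i, s((x, rx), (y, ry)) = chord n i) ∨
        s((x, rx), (y, ry)) = s(sG n (by omega : (0:ℕ) < n), tG n (by omega)) := by
    rintro x y rx ry (⟨h1, h2, h3⟩ | ⟨h1, h2, h3, h4⟩)
    · subst h1; subst h2; subst h3
      exact Or.inl ⟨x, rfl⟩
    · subst h1; subst h2
      right
      have hx : x = ⟨0, by omega⟩ := by apply Fin.ext; exact h3
      have hy : y = ⟨n-1, by omega⟩ := by apply Fin.ext; exact h4
      rw [hx, hy]; rfl
  rcases hor with h | h
  · exact key ia ib ra rb (wt1_cases h)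
  · have := key ib ia rb ra (wt1_cases h)
    rwa [Sym2.eq_swap] at this
end Inst

section WithS
variable {n : ℕ} {hn0 : 0 < n} {S : Finset (Sym2 (Vtx n))}

lemma mem_S_vv' (hS : memX n hn0 S) (i : Fin n) : s(vG n i, pG n i) ∈ S :=
  hS.2.1 _ (vv'_mem_edgeSet i) (c1_vv' i)

lemma mem_S_v'w (hS : memX n hn0 S) (i : Fin n) : s(pG n i, wG n i) ∈ S :=
  hS.2.1 _ (v'w_mem_edgeSet i) (c1_v'w i)

lemma mem_S_conn (hS : memX n hn0 S) (i j : Fin n) (h : (j:ℕ) = (i:ℕ)+1) :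
    s(wG n i, vG n j) ∈ S :=
  hS.2.1 _ (conn_mem_edgeSet i j h) (c1_conn i j h)

lemma adjS {a b : Vtx n} (hmem : s(a, b) ∈ S) (hab : a ≠ b) :
    (SimpleGraph.fromEdgeSet (↑S : Set (Sym2 (Vtx n)))).Adj a b := by
  rw [SimpleGraph.fromEdgeSet_adj]
  exact ⟨hmem, hab⟩

lemma walkS (hS : memX n hn0 S) (u v : Vtx n) :
    Nonempty ((SimpleGraph.fromEdgeSet (↑S : Set (Sym2 (Vtx n)))).Walk u v) :=
  hS.1.2.preconnected u v

/-- The per-block cost. -/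
def bN (S : Finset (Sym2 (Vtx n))) (i : Fin n) : ℕ :=
  if chord n i ∈ S then 2^((i:ℕ)+1) else 2^((i:ℕ)+2)

/-- `bN` as a function on `ℕ`. -/
def bI (S : Finset (Sym2 (Vtx n))) (j : ℕ) : ℕ :=
  if h : j < n then bN S ⟨j, h⟩ else 0

/-- Cumulative cost up to (but not including) block `k`. -/
def PN (S : Finset (Sym2 (Vtx n))) (k : ℕ) : ℕ := k + ∑ j ∈ Finset.range k, bI S j

/-- The diameter bound. -/
def DD (n : ℕ) (S : Finset (Sym2 (Vtx n))) : ℕ := (n-1) + ∑ i : Fin n, bN S i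

/-- The `c1`-value of `S`. -/
def F1N (n : ℕ) (S : Finset (Sym2 (Vtx n))) : ℕ :=
  ∑ i : Fin n, (if chord n i ∈ S then 2^((i:ℕ)+1) else 0)

lemma bI_eq (i : Fin n) : bI S (i : ℕ) = bN S i := by
  rw [bI, dif_pos i.isLt]

lemma bN_lb (i : Fin n) : 2^((i:ℕ)+1) ≤ bN S i := by
  rw [bN]; split <;> simp [pow_succ]

lemma bN_ub (i : Fin n) : bN S i ≤ 2^((i:ℕ)+2) := by
  rw [bN]; split
  · exact Nat.pow_le_pow_right (by norm_num) (by omega)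
  · exact le_refl _

lemma PN_succ (k : ℕ) (hk : k < n) : PN S (k+1) = PN S k + bN S ⟨k, hk⟩ + 1 := by
  rw [PN, PN, Finset.sum_range_succ, bI, dif_pos hk]
  ring

lemma sum_univ_bN : ∑ i : Fin n, bN S i = ∑ j ∈ Finset.range n, bI S j := by
  rw [show ∑ i : Fin n, bN S i = ∑ i : Fin n, bI S (i:ℕ) from
    Finset.sum_congr rfl fun i _ => (bI_eq i).symm]
  exact Fin.sum_univ_eq_sum_range (bI S) n

lemma PN_add_bN_le (i : Fin n) : PN S (i : ℕ) + bN S i ≤ DD n S := by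
  have h1 : PN S (i:ℕ) + bN S i = (i:ℕ) + ∑ j ∈ Finset.range ((i:ℕ)+1), bI S j := by
    rw [PN, Finset.sum_range_succ, bI_eq]; ring
  rw [h1, DD, sum_univ_bN]
  have h2 : ∑ j ∈ Finset.range ((i:ℕ)+1), bI S j ≤ ∑ j ∈ Finset.range n, bI S j :=
    Finset.sum_le_sum_of_subset (Finset.range_subset_range.mpr i.isLt)
  have h3 : (i:ℕ) ≤ n - 1 := by omega
  omega

lemma DD_eq_PN (hn0' : 0 < n) : DD n S = PN S (n-1) + bI S (n-1) := by
  have h : ∑ j ∈ Finset.range n, bI S j = ∑ j ∈ Finset.range (n-1), bI S j + bI S (n-1) := by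
    have hnn : n = (n-1)+1 := by omega
    generalize bI S = f
    conv_lhs => rw [hnn, Finset.sum_range_succ]
  rw [DD, sum_univ_bN, PN, h]
  ring


/-- Distance in the subgraph induced by `S`. -/
noncomputable def dS (S : Finset (Sym2 (Vtx n))) (u v : Vtx n) : ℕ :=
  wdist (↑S) (c2G n) u v

lemma dS_vv' (hS : memX n hn0 S) (i : Fin n) : dS S (vG n i) (pG n i) ≤ 2^((i:ℕ)+1) := by
  have h := wdist_le_edge (c2 := c2G n) (adjS (mem_S_vv' hS i) (by simp [vG, pG]))
  rwa [c2_vv'] at h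

lemma dS_v'w (hS : memX n hn0 S) (i : Fin n) : dS S (pG n i) (wG n i) ≤ 2^((i:ℕ)+1) := by
  have h := wdist_le_edge (c2 := c2G n) (adjS (mem_S_v'w hS i) (by simp [pG, wG]))
  rwa [c2_v'w] at h

lemma dS_conn (hS : memX n hn0 S) (i j : Fin n) (h : (j:ℕ) = (i:ℕ)+1) :
    dS S (wG n i) (vG n j) ≤ 1 := by
  have h' := wdist_le_edge (c2 := c2G n) (adjS (mem_S_conn hS i j h) (by simp [wG, vG]))
  rwa [c2_conn i j h] at h'

lemma dS_triangle (hS : memX n hn0 S) (u v w : Vtx n) :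
    dS S u w ≤ dS S u v + dS S v w :=
  wdist_triangle (walkS hS u v) (walkS hS v w)

lemma dS_comm (u v : Vtx n) : dS S u v = dS S v u := wdist_comm

lemma dS_self (u : Vtx n) : dS S u u = 0 := wdist_self

lemma dS_vw (hS : memX n hn0 S) (i : Fin n) : dS S (vG n i) (wG n i) ≤ bN S i := by
  by_cases hc : chord n i ∈ S
  · have h := wdist_le_edge (c2 := c2G n) (adjS (a := vG n i) (b := wG n i) hc (by simp [vG, wG]))
    rw [c2_chord] at h
    rw [bN, if_pos hc]
    exact h
  · have h := (dS_triangle hS (vG n i) (pG n i) (wG n i)).trans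
      (add_le_add (dS_vv' hS i) (dS_v'w hS i))
    rw [bN, if_neg hc]
    calc dS S (vG n i) (wG n i) ≤ 2^((i:ℕ)+1) + 2^((i:ℕ)+1) := h
    _ = 2^((i:ℕ)+2) := by ring

lemma dS_step (hS : memX n hn0 S) (i j : Fin n) (h : (j:ℕ) = (i:ℕ)+1) :
    dS S (vG n i) (vG n j) ≤ bN S i + 1 :=
  (dS_triangle hS _ (wG n i) _).trans (add_le_add (dS_vw hS i) (dS_conn hS i j h))

lemma dS_vv (hS : memX n hn0 S) : ∀ (m : ℕ) (i j : Fin n), (j:ℕ) = (i:ℕ) + m →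
    dS S (vG n i) (vG n j) + PN S (i:ℕ) ≤ PN S (j:ℕ) := by
  intro m
  induction m with
  | zero =>
    intro i j h
    have : j = i := Fin.ext (by omega)
    subst this
    rw [dS_self]
    omega
  | succ m ih =>
    intro i j h
    have hj' : (i:ℕ) + m < n := by omega
    set j' : Fin n := ⟨(i:ℕ) + m, hj'⟩ with hj'def
    have hval : (j' : ℕ) = (i:ℕ) + m := by rw [hj'def]
    have h1 := ih i j' rfl
    rw [hval] at h1
    have h2 : dS S (vG n j') (vG n j) ≤ bN S j' + 1 := dS_step hS j' j (by rw [hval]; omega)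
    have h3 := dS_triangle hS (vG n i) (vG n j') (vG n j)
    have h4 : PN S ((j:ℕ)) = PN S ((i:ℕ) + m) + bN S j' + 1 := by
      rw [h]
      exact PN_succ ((i:ℕ) + m) hj'
    omega

lemma dS_inblock (hS : memX n hn0 S) (i : Fin n) (r r' : Fin 3) :
    dS S (i, r) (i, r') ≤ bN S i := by
  have hvv' := dS_vv' hS i
  have hv'w := dS_v'w hS i
  have hvw := dS_vw hS i
  have hlb := bN_lb (S := S) i
  have hv'v : dS S (pG n i) (vG n i) ≤ 2^((i:ℕ)+1) := by rw [dS_comm]; exact hvv'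
  have hwv' : dS S (wG n i) (pG n i) ≤ 2^((i:ℕ)+1) := by rw [dS_comm]; exact hv'w
  have hwv : dS S (wG n i) (vG n i) ≤ bN S i := by rw [dS_comm]; exact hvw
  have hself : ∀ r'' : Fin 3, dS S (i, r'') (i, r'') ≤ bN S i := fun r'' => by
    rw [dS_self]; omega
  fin_cases r <;> fin_cases r'
  · exact hself _
  · exact hvv'.trans hlb
  · exact hvw
  · exact hv'v.trans hlb
  · exact hself _
  · exact hv'w.trans hlb
  · exact hwv
  · exact hwv'.trans hlb
  · exact hself _

lemma dS_exit (hS : memX n hn0 S) (i j : Fin n) (h : (j:ℕ) = (i:ℕ)+1) (r : Fin 3) :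
    dS S (i, r) (vG n j) ≤ bN S i + 1 := by
  refine (dS_triangle hS (i, r) (wG n i) (vG n j)).trans ?_
  exact add_le_add (dS_inblock hS i r 2) (dS_conn hS i j h)

lemma dS_enter (hS : memX n hn0 S) (j : Fin n) (r : Fin 3) :
    dS S (vG n j) (j, r) ≤ bN S j := by
  have := dS_inblock hS j 0 r
  rwa [show vG n j = (j, 0) from rfl]

lemma dS_le_DD (hS : memX n hn0 S) (u v : Vtx n) : dS S u v ≤ DD n S := by
  obtain ⟨i, r⟩ := u
  obtain ⟨j, r'⟩ := v
  rcases lt_trichotomy (i:ℕ) (j:ℕ) with hij | hij | hij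
  · -- i < j
    have hi1 : (i:ℕ) + 1 < n := by have := j.isLt; omega
    set i' : Fin n := ⟨(i:ℕ)+1, hi1⟩ with hi'
    have h1 : dS S (i, r) (vG n i') ≤ bN S i + 1 := dS_exit hS i i' rfl r
    have h2 : dS S (vG n i') (vG n j) + PN S ((i':ℕ)) ≤ PN S (j:ℕ) :=
      dS_vv hS ((j:ℕ) - ((i:ℕ)+1)) i' j (by simp [hi']; omega)
    have h3 : dS S (vG n j) (j, r') ≤ bN S j := dS_enter hS j r'
    have h4 := dS_triangle hS (i, r) (vG n i') (j, r')
    have h5 := dS_triangle hS (vG n i') (vG n j) (j, r')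
    have h6 : PN S ((i':ℕ)) = PN S (i:ℕ) + bN S i + 1 := by
      have := PN_succ (S := S) (i:ℕ) i.isLt
      simp only [hi']
      rw [this]
    have h7 := PN_add_bN_le (S := S) j
    omega
  · -- same block
    have heq : j = i := Fin.ext hij.symm
    subst heq
    have h1 := dS_inblock hS j r r'
    have h2 := PN_add_bN_le (S := S) j
    omega
  · -- i > j : symmetric
    have hj1 : (j:ℕ) + 1 < n := by have := i.isLt; omega
    set j' : Fin n := ⟨(j:ℕ)+1, hj1⟩ with hj'
    have h1 : dS S (j, r') (vG n j') ≤ bN S j + 1 := dS_exit hS j j' rfl r'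
    have h2 : dS S (vG n j') (vG n i) + PN S ((j':ℕ)) ≤ PN S (i:ℕ) :=
      dS_vv hS ((i:ℕ) - ((j:ℕ)+1)) j' i (by simp [hj']; omega)
    have h3 : dS S (vG n i) (i, r) ≤ bN S i := dS_enter hS i r
    have h4 := dS_triangle hS (j, r') (vG n j') (i, r)
    have h5 := dS_triangle hS (vG n j') (vG n i) (i, r)
    have h6 : PN S ((j':ℕ)) = PN S (j:ℕ) + bN S j + 1 := by
      have := PN_succ (S := S) (j:ℕ) j.isLt
      simp only [hj']
      rw [this]
    have h7 := PN_add_bN_le (S := S) i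
    have hcm : dS S (i, r) (j, r') = dS S (j, r') (i, r) := dS_comm _ _
    omega


/-- Half-block value. -/
def hZ (S : Finset (Sym2 (Vtx n))) (i : Fin n) : ℤ :=
  if chord n i ∈ S then 2^((i:ℕ)) else 2^((i:ℕ)+1)

/-- The potential function. -/
def phi (S : Finset (Sym2 (Vtx n))) (u : Vtx n) : ℤ :=
  (PN S u.1 : ℤ) + (if u.2 = 0 then 0 else if u.2 = 1 then hZ S u.1 else (bN S u.1 : ℤ))

lemma hZ_pos (i : Fin n) : 0 < hZ S i := by
  rw [hZ]; split <;> positivity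

lemma hZ_le (i : Fin n) : hZ S i ≤ 2^((i:ℕ)+1) := by
  rw [hZ]; split
  · exact pow_le_pow_right₀ (by norm_num) (by omega)
  · exact le_refl _

lemma bN_eq_two_hZ (i : Fin n) : (bN S i : ℤ) = 2 * hZ S i := by
  rw [bN, hZ]
  split <;> push_cast <;> ring

lemma phi_lip_ordered (hS : memX n hn0 S) {a b : Vtx n} (hmem : s(a, b) ∈ S)
    (hw : (wtG n a b).2 ≠ 0) : |phi S a - phi S b| ≤ (c2G n s(a, b) : ℤ) := by
  obtain ⟨ia, ra⟩ := a
  obtain ⟨ib, rb⟩ := b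
  rcases wt2_cases hw with ⟨h1, h2, h3⟩ | ⟨h1, h2, h3⟩ | ⟨h1, h2, h3⟩ | ⟨h1, h2, h3⟩ |
    ⟨h1, h2, h3, h4⟩ <;> simp only at h1 h2 h3
  · -- chord
    subst h1; subst h2; subst h3
    have hc : chord n ia ∈ S := hmem
    rw [show s((ia, (0:Fin 3)), (ia, (2:Fin 3))) = s(vG n ia, wG n ia) from rfl, c2_chord]
    simp only [phi]
    norm_num
    rw [if_neg (show ¬((2:Fin 3) = 0) by decide), if_neg (show ¬((2:Fin 3) = 1) by decide),
      abs_of_nonneg (show (0:ℤ) ≤ (bN S ia : ℤ) by positivity), bN, if_pos hc]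
    push_cast
    exact le_refl _
  · -- v v'
    subst h1; subst h2; subst h3
    rw [show s((ia, (0:Fin 3)), (ia, (1:Fin 3))) = s(vG n ia, pG n ia) from rfl, c2_vv']
    simp only [phi]
    norm_num
    rw [abs_of_nonneg (le_of_lt (hZ_pos ia))]
    push_cast
    exact hZ_le ia
  · -- v' w
    subst h1; subst h2; subst h3
    rw [show s((ia, (1:Fin 3)), (ia, (2:Fin 3))) = s(pG n ia, wG n ia) from rfl, c2_v'w]
    simp only [phi]
    norm_num
    rw [bN_eq_two_hZ]
    have := hZ_pos (S := S) ia
    have := hZ_le (S := S) ia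
    rw [if_neg (show ¬((2:Fin 3) = 0) by decide), if_neg (show ¬((2:Fin 3) = 1) by decide)]
    rw [show hZ S ia - 2 * hZ S ia = -(hZ S ia) by ring, abs_neg,
      abs_of_nonneg (by omega)]
    push_cast
    omega
  · -- connector
    subst h1; subst h2
    rw [show s((ia, (2:Fin 3)), (ib, (0:Fin 3))) = s(wG n ia, vG n ib) from rfl,
      c2_conn ia ib h3]
    simp only [phi]
    norm_num
    have hPN : PN S (ib:ℕ) = PN S (ia:ℕ) + bN S ia + 1 := by
      rw [h3]; exact PN_succ (ia:ℕ) ia.isLt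
    rw [hPN]
    push_cast
    rw [show ((PN S ia : ℤ) + bN S ia - ((PN S ia : ℤ) + bN S ia + 1)) = -1 by ring]
    norm_num
  · -- s t : excluded
    exfalso
    subst h1; subst h2
    have hia : ia = ⟨0, hn0⟩ := Fin.ext h3
    have hib : ib = ⟨n-1, Nat.sub_lt hn0 one_pos⟩ := Fin.ext h4
    rw [hia, hib] at hmem
    exact hS.2.2 hmem

lemma phi_lip (hS : memX n hn0 S) (a b : Vtx n)
    (hab : (SimpleGraph.fromEdgeSet (↑S : Set (Sym2 (Vtx n)))).Adj a b) :
    |phi S a - phi S b| ≤ (c2G n s(a, b) : ℤ) := by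
  rw [SimpleGraph.fromEdgeSet_adj] at hab
  obtain ⟨hmem, hne⟩ := hab
  have hE := hS.1.1 hmem
  rw [Gn, SimpleGraph.edgeSet_fromEdgeSet] at hE
  have hc2 : c2G n s(a, b) ≠ 0 := hE.1
  have hor : (wtG n a b).2 ≠ 0 ∨ (wtG n b a).2 ≠ 0 := by
    by_contra hcon
    push_neg at hcon
    simp only [c2G, Sym2.lift_mk, hcon.1, hcon.2, add_zero] at hc2
    exact hc2 rfl
  rcases hor with h | h
  · exact phi_lip_ordered hS hmem h
  · rw [abs_sub_comm, Sym2.eq_swap]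
    exact phi_lip_ordered hS (by rwa [Sym2.eq_swap]) h

lemma phi_s (hS : memX n hn0 S) : phi S (sG n hn0) = 0 := by
  simp [phi, sG, PN]

lemma phi_t (hS : memX n hn0 S) : phi S (tG n hn0) = (DD n S : ℤ) := by
  have h1 : DD n S = PN S (n-1) + bI S (n-1) := DD_eq_PN hn0
  have h2 : bI S (n-1) = bN S ⟨n-1, by omega⟩ := dif_pos (by omega)
  simp only [phi, tG]
  norm_num
  rw [h1, h2]
  push_cast
  ring

lemma DD_le_dS_st (hS : memX n hn0 S) :
    DD n S ≤ dS S (sG n hn0) (tG n hn0) := by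
  obtain ⟨p, hp⟩ := wdist_exists (c2 := c2G n) (walkS hS (sG n hn0) (tG n hn0))
  rw [dS, hp]
  have hb := weight_ge_potential (phi S) (phi_lip hS) p
  rw [phi_s hS, phi_t hS] at hb
  have : |(0:ℤ) - (DD n S : ℤ)| = (DD n S : ℤ) := by
    rw [zero_sub, abs_neg, abs_of_nonneg (by positivity)]
  rw [this] at hb
  exact_mod_cast hb


lemma S_le_Gn (hS : memX n hn0 S) :
    SimpleGraph.fromEdgeSet (↑S : Set (Sym2 (Vtx n))) ≤ Gn n := by
  rw [Gn]
  apply SimpleGraph.fromEdgeSet_mono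
  intro e he
  have := hS.1.1 he
  rw [Gn, SimpleGraph.edgeSet_fromEdgeSet] at this
  exact this.1

lemma walkE (hS : memX n hn0 S) (u v : Vtx n) :
    Nonempty ((SimpleGraph.fromEdgeSet ((Gn n).edgeSet)).Walk u v) := by
  rw [SimpleGraph.fromEdgeSet_edgeSet]
  have hconn : (Gn n).Connected := (hS.1.2).mono (S_le_Gn hS)
  exact hconn.preconnected u v

lemma dE_ge_one (hS : memX n hn0 S) {u v : Vtx n} (huv : u ≠ v) :
    1 ≤ wdist ((Gn n).edgeSet) (c2G n) u v := by
  obtain ⟨p, hp⟩ := wdist_exists (c2 := c2G n) (walkE hS u v)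
  rw [hp]
  refine weight_ge_one (fun e he => ?_) huv p
  rw [Gn, SimpleGraph.edgeSet_fromEdgeSet] at he
  exact he.1

lemma dE_st (hS : memX n hn0 S) (hn : 2 ≤ n) :
    wdist ((Gn n).edgeSet) (c2G n) (sG n hn0) (tG n hn0) = 1 := by
  have hst : sG n hn0 ≠ tG n hn0 := by simp [sG, tG]
  have hle : wdist ((Gn n).edgeSet) (c2G n) (sG n hn0) (tG n hn0) ≤ 1 := by
    have hadj : (SimpleGraph.fromEdgeSet ((Gn n).edgeSet)).Adj (sG n hn0) (tG n hn0) := by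
      rw [SimpleGraph.fromEdgeSet_adj]
      exact ⟨st_mem_edgeSet hn, hst⟩
    have h := wdist_le_edge (c2 := c2G n) hadj
    rwa [c2_st hn] at h
  exact le_antisymm hle (dE_ge_one hS hst)

lemma dS_st (hS : memX n hn0 S) : dS S (sG n hn0) (tG n hn0) = DD n S :=
  le_antisymm (dS_le_DD hS _ _) (DD_le_dS_st hS)

lemma st_ne (hn0' : 0 < n) : sG n hn0' ≠ tG n hn0' := by simp [sG, tG]

lemma f2_eq (hS : memX n hn0 S) (hn : 2 ≤ n) :
    f2 ((Gn n).edgeSet) (↑S) (c2G n) = (DD n S : ℚ) := by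
  rw [f2]
  split_ifs with hfe
  · apply le_antisymm
    · apply Finset.sup'_le
      intro p hp
      simp only [Finset.mem_filter, Finset.mem_univ, true_and] at hp
      have h1 : wdist (↑S) (c2G n) p.1 p.2 ≤ DD n S := dS_le_DD hS p.1 p.2
      have h2 : 1 ≤ wdist ((Gn n).edgeSet) (c2G n) p.1 p.2 := dE_ge_one hS hp
      have hpos : (0:ℚ) < (wdist ((Gn n).edgeSet) (c2G n) p.1 p.2 : ℚ) := by
        exact_mod_cast h2
      rw [div_le_iff₀ hpos]
      calc (wdist (↑S) (c2G n) p.1 p.2 : ℚ) ≤ (DD n S : ℚ) := by exact_mod_cast h1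
      _ ≤ (DD n S : ℚ) * (wdist ((Gn n).edgeSet) (c2G n) p.1 p.2 : ℚ) := by
          apply le_mul_of_one_le_right (by positivity)
          exact_mod_cast h2
    · refine le_trans (le_of_eq ?_) (Finset.le_sup'
        (fun p : Vtx n × Vtx n =>
          (wdist (↑S) (c2G n) p.1 p.2 : ℚ) / (wdist ((Gn n).edgeSet) (c2G n) p.1 p.2 : ℚ))
        (b := (sG n hn0, tG n hn0)) ?_)
      · rw [dE_st hS hn]
        rw [show wdist (↑S : Set (Sym2 (Vtx n))) (c2G n) (sG n hn0) (tG n hn0) = DD n S from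
          dS_st hS]
        norm_num
      · simp only [Finset.mem_filter, Finset.mem_univ, true_and]
        exact st_ne hn0
  · exact absurd ⟨(sG n hn0, tG n hn0),
      by simp only [Finset.mem_filter, Finset.mem_univ, true_and]; exact st_ne hn0⟩ hfe


/-- indices of chords present in `S`. -/
def IS (S : Finset (Sym2 (Vtx n))) : Finset (Fin n) :=
  Finset.univ.filter (fun i => chord n i ∈ S)

open scoped Classical in
/-- The zero-cost edges of `Gn`. -/
noncomputable def Zset (n : ℕ) : Finset (Sym2 (Vtx n)) :=
  Finset.univ.filter (fun e => e ∈ (Gn n).edgeSet ∧ c1G n e = 0)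

open scoped Classical in
lemma S_decomp (hS : memX n hn0 S) (hn : 2 ≤ n) :
    S = Zset n ∪ (IS S).image (chord n) := by
  ext e
  simp only [Zset, IS, Finset.mem_union, Finset.mem_filter, Finset.mem_univ, true_and,
    Finset.mem_image]
  constructor
  · intro he
    by_cases hc : c1G n e = 0
    · exact Or.inl ⟨hS.1.1 he, hc⟩
    · rcases c1_pos_classify hn hc with ⟨i, rfl⟩ | rfl
      · exact Or.inr ⟨i, he, rfl⟩
      · exact absurd he hS.2.2
  · rintro (⟨hE, hc⟩ | ⟨i, hi, rfl⟩)
    · exact hS.2.1 e hE hc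
    · exact hi

lemma f1_eq (hS : memX n hn0 S) (hn : 2 ≤ n) : f1 (c1G n) S = (F1N n S : ℤ) := by
  have hsub : (IS S).image (chord n) ⊆ S := by
    intro e he
    simp only [IS, Finset.mem_image, Finset.mem_filter, Finset.mem_univ, true_and] at he
    obtain ⟨i, hi, rfl⟩ := he
    exact hi
  have hzero : ∀ e ∈ S, e ∉ (IS S).image (chord n) → c1G n e = 0 := by
    intro e he hni
    by_contra hc
    rcases c1_pos_classify hn hc with ⟨i, rfl⟩ | rfl
    · refine hni ?_
      simp only [IS, Finset.mem_image, Finset.mem_filter, Finset.mem_univ, true_and]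
      exact ⟨i, he, rfl⟩
    · exact hS.2.2 he
  rw [f1, ← Finset.sum_subset hsub hzero,
    Finset.sum_image (fun i _ j _ h => chord_injective n h)]
  have : ∀ i ∈ IS S, c1G n (chord n i) = 2^((i:ℕ)+1) := fun i _ => c1_chord i
  rw [Finset.sum_congr rfl this, F1N, ← Finset.sum_filter]
  rw [show (Finset.univ.filter fun i : Fin n => chord n i ∈ S) = IS S from rfl]
  push_cast
  rfl

lemma sum_range_two_pow (m : ℕ) : 1 + ∑ i ∈ Finset.range m, 2^i = 2^m := by
  induction m with
  | zero => simp
  | succ m ih => rw [Finset.sum_range_succ, pow_succ]; omega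

lemma sum_empty_of_two_pow {C : Finset ℕ} (hC : ∑ i ∈ C, 2^i = 0) : C = ∅ := by
  by_contra hne
  obtain ⟨x, hx⟩ := Finset.nonempty_iff_ne_empty.mpr hne
  have h1 : 2^x ≤ ∑ i ∈ C, 2^i :=
    Finset.single_le_sum (f := fun i => 2^i) (fun _ _ => Nat.zero_le _) hx
  have h2 : 0 < 2^x := Nat.pow_pos (by norm_num)
  omega

lemma sum_two_pow_inj : ∀ (N : ℕ) (A B : Finset ℕ),
    ∑ i ∈ A, 2^i = N → ∑ i ∈ B, 2^i = N → A = B := by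
  intro N
  induction N using Nat.strong_induction_on with
  | _ N ih =>
    intro A B hA hB
    rcases Nat.eq_zero_or_pos N with h0 | hpos
    · subst h0
      rw [sum_empty_of_two_pow hA, sum_empty_of_two_pow hB]
    · have hAne : A.Nonempty := by
        by_contra h
        rw [Finset.not_nonempty_iff_eq_empty] at h
        subst h
        simp at hA
        omega
      have hBne : B.Nonempty := by
        by_contra h
        rw [Finset.not_nonempty_iff_eq_empty] at h
        subst h
        simp at hB
        omega
      obtain ⟨a, ha⟩ : ∃ a, A.max' hAne = a := ⟨_, rfl⟩
      obtain ⟨b, hb⟩ : ∃ b, B.max' hBne = b := ⟨_, rfl⟩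
      have haA : a ∈ A := ha ▸ A.max'_mem hAne
      have hbB : b ∈ B := hb ▸ B.max'_mem hBne
      have hles : ∀ (C : Finset ℕ) (hCne : C.Nonempty), ∑ i ∈ C, 2^i ≤ 2^(C.max' hCne + 1) - 1 := by
        intro C hCne
        have hsub : C ⊆ Finset.range (C.max' hCne + 1) := by
          intro x hx
          rw [Finset.mem_range]
          exact Nat.lt_succ_of_le (Finset.le_max' C x hx)
        have h1 : ∑ i ∈ C, 2^i ≤ ∑ i ∈ Finset.range (C.max' hCne + 1), 2^i :=
          Finset.sum_le_sum_of_subset hsub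
        have h2 := sum_range_two_pow (C.max' hCne + 1)
        omega
      have hgeA : 2^a ≤ N := hA ▸ Finset.single_le_sum (f := fun i => 2^i)
        (fun _ _ => Nat.zero_le _) haA
      have hgeB : 2^b ≤ N := hB ▸ Finset.single_le_sum (f := fun i => 2^i)
        (fun _ _ => Nat.zero_le _) hbB
      have hltA : N ≤ 2^(a+1) - 1 := by have := hles A hAne; rw [ha] at this; omega
      have hltB : N ≤ 2^(b+1) - 1 := by have := hles B hBne; rw [hb] at this; omega
      have hab : a = b := by
        by_contra hne
        rcases Nat.lt_or_ge a b with h | h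
        · have : 2^(a+1) ≤ 2^b := Nat.pow_le_pow_right (by norm_num) (by omega)
          omega
        · have h' : b < a := by omega
          have : 2^(b+1) ≤ 2^a := Nat.pow_le_pow_right (by norm_num) (by omega)
          omega
      subst hab
      have hposa : 0 < 2^a := Nat.pow_pos (by norm_num)
      have hA' : 2^a + ∑ i ∈ A.erase a, 2^i = N := by
        rw [Finset.add_sum_erase _ _ haA]; exact hA
      have hB' : 2^a + ∑ i ∈ B.erase a, 2^i = N := by
        rw [Finset.add_sum_erase _ _ hbB]; exact hB
      have hEq : A.erase a = B.erase a :=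
        ih (N - 2^a) (by omega) _ _ (by omega) (by omega)
      have := Finset.insert_erase haA
      rw [← this, hEq, Finset.insert_erase hbB]

lemma F1N_inj (hS : memX n hn0 S) {S' : Finset (Sym2 (Vtx n))} (hS' : memX n hn0 S')
    (hn : 2 ≤ n) (hne : S ≠ S') : F1N n S ≠ F1N n S' := by
  intro hF
  apply hne
  have hIS : IS S = IS S' := by
    have hmap : ∀ T : Finset (Sym2 (Vtx n)),
        F1N n T = ∑ j ∈ (IS T).image (fun i : Fin n => (i:ℕ)+1), 2^j := by
      intro T
      rw [Finset.sum_image (fun i _ j _ h => by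
        have : (i:ℕ) + 1 = (j:ℕ) + 1 := h
        exact Fin.ext (by omega))]
      rw [F1N, ← Finset.sum_filter]
      rfl
    have h1 := hmap S
    have h2 := hmap S'
    rw [hF] at h1
    have himg := sum_two_pow_inj (F1N n S') _ _ h1.symm h2.symm
    have hinj : Function.Injective (fun i : Fin n => (i:ℕ)+1) := by
      intro i j h
      ext
      simpa using h
    exact Finset.image_injective hinj himg
  rw [S_decomp hS hn, S_decomp hS' hn, hIS]

lemma F1N_add_DD (hn : 2 ≤ n) : F1N n S + DD n S = (n-1) + ∑ i : Fin n, 2^((i:ℕ)+2) := by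
  rw [F1N, DD]
  have key : (∑ i : Fin n, if chord n i ∈ S then 2^((i:ℕ)+1) else 0) + ∑ i : Fin n, bN S i
      = ∑ i : Fin n, 2^((i:ℕ)+2) := by
    rw [← Finset.sum_add_distrib]
    refine Finset.sum_congr rfl fun i _ => ?_
    rw [bN]
    split <;> ring
  omega

end WithS

/-- For `n ≥ 2` and distinct spanners `S, S' ∈ X` of `G_n`, the value
vectors `f(S)` and `f(S')` are distinct and neither dominates the other. -/
theorem memX_no_mutual_domination (n : ℕ) (hn : 2 ≤ n) (S S' : Finset (Sym2 (Vtx n)))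
    (hS : memX n (by omega) S) (hS' : memX n (by omega) S') (hne : S ≠ S') :
    valueVec (Gn n) (c1G n) (c2G n) S ≠ valueVec (Gn n) (c1G n) (c2G n) S' ∧
      ¬ Dominates (valueVec (Gn n) (c1G n) (c2G n) S) (valueVec (Gn n) (c1G n) (c2G n) S') ∧
      ¬ Dominates (valueVec (Gn n) (c1G n) (c2G n) S') (valueVec (Gn n) (c1G n) (c2G n) S) := by
  have hv : ∀ (T : Finset (Sym2 (Vtx n))), memX n (by omega) T →
      valueVec (Gn n) (c1G n) (c2G n) T = ((F1N n T : ℚ), (DD n T : ℚ)) := by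
    intro T hT
    rw [valueVec, f1_eq hT hn, f2_eq hT hn]
    push_cast
    rfl
  have hF : F1N n S ≠ F1N n S' := F1N_inj hS hS' hn hne
  have hsum : F1N n S + DD n S = F1N n S' + DD n S' := by
    rw [F1N_add_DD hn, F1N_add_DD hn]
  rw [hv S hS, hv S' hS']
  refine ⟨?_, ?_, ?_⟩
  · intro h
    rw [Prod.mk.injEq] at h
    exact hF (by exact_mod_cast h.1)
  · rintro ⟨hle, -⟩
    rw [Prod.mk_le_mk] at hle
    have h1 : F1N n S ≤ F1N n S' := by exact_mod_cast hle.1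
    have h2 : DD n S ≤ DD n S' := by exact_mod_cast hle.2
    omega
  · rintro ⟨hle, -⟩
    rw [Prod.mk_le_mk] at hle
    have h1 : F1N n S' ≤ F1N n S := by exact_mod_cast hle.1
    have h2 : DD n S' ≤ DD n S := by exact_mod_cast hle.2
    omega

end MSpPaper
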